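/- Let μ be a probability measure on ℝ with characteristic function Φ_μ, and let θ : Ω → ℝ be a random variable with law μ on a probability space (Ω, F, P). Let α₁, α₂, α₃ ∈ ℕ and assume E[|θ|^{α₁}] < ∞. Then the mixed-trigonometric-polynomial moment E[θ^{α₁}·cos^{α₂}(θ)·sin^{α₃}(θ)], viewed as a complex number, equals (1 / (i^{α₁+α₃}·2^{α₂+α₃})) · Σ_{k₁=0}^{α₂} Σ_{k₂=0}^{α₃} C(α₂,k₁)·C(α₃,k₂)·(−1)^{α₃−k₂} · (d^{α₁}/dt^{α₁} Φ_μ)(t) evaluated at t = 2(k₁+k₂) − α₂ − α₃, where C(n,k) denotes the binomial coefficient. -/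

import Mathlib

open MeasureTheory

/-- The characteristic function of a measure `μ` on `ℝ`:
`charFun μ t = ∫ x, exp (i t x) ∂μ` (Mathlib's `charFun` specialized to `ℝ`). -/
noncomputable def charFun (μ : Measure ℝ) (t : ℝ) : ℂ :=
  ∫ x, Complex.exp ((x * t : ℝ) * Complex.I) ∂μ

noncomputable def myE (x : ℝ) (t : ℤ) : ℂ := Complex.exp ((x * (t : ℝ) : ℝ) * Complex.I)

lemma myE_mul (x : ℝ) (a b : ℤ) : myE x a * myE x b = myE x (a + b) := by
  rw [myE, myE, myE, ← Complex.exp_add]; congr 1; push_cast; ring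

section PW
open Complex

lemma expow (x : ℝ) {k n : ℕ} (h : k ≤ n) :
    Complex.exp (x * Complex.I) ^ k * (Complex.exp (x * Complex.I))⁻¹ ^ (n - k) =
      myE x (2 * k - n) := by
  rw [← Complex.exp_neg, ← Complex.exp_nat_mul, ← Complex.exp_nat_mul, ← Complex.exp_add, myE]
  congr 1
  have : ((n - k : ℕ) : ℂ) = (n : ℂ) - k := by push_cast [Nat.cast_sub h]; ring
  push_cast [this]; ring

lemma cos_pow (x : ℝ) (n : ℕ) :
    ((Real.cos x : ℂ)) ^ n =
      (1 / 2 ^ n) * ∑ k ∈ Finset.range (n + 1), (n.choose k : ℂ) * myE x (2 * k - n) := by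
  have hcos : (Real.cos x : ℂ) =
      (Complex.exp (x * Complex.I) + (Complex.exp (x * Complex.I))⁻¹) / 2 := by
    rw [Complex.ofReal_cos, Complex.cos, ← Complex.exp_neg]; ring_nf
  rw [hcos, div_pow, add_pow, Finset.sum_div, Finset.mul_sum]
  refine Finset.sum_congr rfl fun k hk => ?_
  have hk' : k ≤ n := Nat.lt_succ_iff.mp (Finset.mem_range.mp hk)
  rw [expow x hk']; ring

lemma sin_pow (x : ℝ) (n : ℕ) :
    ((Real.sin x : ℂ)) ^ n =
      (1 / (Complex.I ^ n * 2 ^ n)) * ∑ k ∈ Finset.range (n + 1),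
        (n.choose k : ℂ) * (-1 : ℂ) ^ (n - k) * myE x (2 * k - n) := by
  have hsin : (Real.sin x : ℂ) =
      ((-Complex.exp (x * Complex.I)) + (Complex.exp (x * Complex.I))⁻¹) * Complex.I / 2 := by
    rw [Complex.ofReal_sin, Complex.sin, ← Complex.exp_neg]; ring_nf
  rw [hsin, div_pow, mul_pow, add_pow, Finset.sum_mul, Finset.sum_div, Finset.mul_sum]
  refine Finset.sum_congr rfl fun k hk => ?_
  have hk' : k ≤ n := Nat.lt_succ_iff.mp (Finset.mem_range.mp hk)
  rw [neg_pow, mul_assoc ((-1:ℂ)^k), expow x hk']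
  have h1 : (-1 : ℂ) ^ (n - k) * (-1 : ℂ) ^ k = (-1 : ℂ) ^ n := by
    rw [← pow_add, Nat.sub_add_cancel hk']
  have hIn : (Complex.I : ℂ) ^ n ≠ 0 := pow_ne_zero _ Complex.I_ne_zero
  have hI2 : Complex.I ^ n * Complex.I ^ n = (-1 : ℂ) ^ n := by
    rw [← mul_pow, Complex.I_mul_I]
  field_simp
  have h3 : ((-1:ℂ)) ^ k * ((-1:ℂ)) ^ n = (-1:ℂ) ^ (n - k) := by
    calc ((-1:ℂ)) ^ k * ((-1:ℂ)) ^ n = (-1:ℂ) ^ (n - k) * ((-1:ℂ) ^ k * (-1:ℂ) ^ k) := by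
          rw [← h1]; ring
      _ = (-1:ℂ) ^ (n - k) * 1 := by rw [← pow_add]; exact congrArg _ (Even.neg_one_pow ⟨k, rfl⟩)
      _ = _ := mul_one _
  have h4 : ((-1:ℂ)) ^ k * (Complex.I ^ n * Complex.I ^ n) = (-1:ℂ) ^ (n - k) := by
    rw [hI2]; exact h3
  linear_combination (myE x (2 * (k:ℤ) - (n:ℤ)) * ((n.choose k) : ℂ)) * h4

lemma pointwise (x : ℝ) (α₁ α₂ α₃ : ℕ) :
    ((x ^ α₁ * (Real.cos x) ^ α₂ * (Real.sin x) ^ α₃ : ℝ) : ℂ) =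
      (1 / (Complex.I ^ (α₁ + α₃) * 2 ^ (α₂ + α₃))) *
        ∑ k₁ ∈ Finset.range (α₂ + 1), ∑ k₂ ∈ Finset.range (α₃ + 1),
          (α₂.choose k₁ : ℂ) * (α₃.choose k₂ : ℂ) * (-1 : ℂ) ^ (α₃ - k₂) *
            (((x : ℂ) * Complex.I) ^ α₁ * myE x (2 * (k₁ + k₂) - α₂ - α₃)) := by
  rw [Complex.ofReal_mul, Complex.ofReal_mul, Complex.ofReal_pow, Complex.ofReal_pow,
    Complex.ofReal_pow]
  calc ((x:ℂ))^α₁ * ((Real.cos x : ℂ))^α₂ * ((Real.sin x : ℂ))^α₃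
      = ((x:ℂ))^α₁ * (1 / 2 ^ α₂) * (1 / (Complex.I ^ α₃ * 2 ^ α₃)) *
        ((∑ k₁ ∈ Finset.range (α₂ + 1), (α₂.choose k₁ : ℂ) * myE x (2 * k₁ - α₂)) *
         (∑ k₂ ∈ Finset.range (α₃ + 1),
            (α₃.choose k₂ : ℂ) * (-1 : ℂ) ^ (α₃ - k₂) * myE x (2 * k₂ - α₃))) := by
        rw [cos_pow, sin_pow]; ring
    _ = ((x:ℂ))^α₁ * (1 / 2 ^ α₂) * (1 / (Complex.I ^ α₃ * 2 ^ α₃)) *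
        (∑ k₁ ∈ Finset.range (α₂ + 1), ∑ k₂ ∈ Finset.range (α₃ + 1),
          ((α₂.choose k₁ : ℂ) * myE x (2 * k₁ - α₂)) *
          ((α₃.choose k₂ : ℂ) * (-1 : ℂ) ^ (α₃ - k₂) * myE x (2 * k₂ - α₃))) := by
        rw [Finset.sum_mul_sum]
    _ = _ := by
        simp only [Finset.mul_sum]
        refine Finset.sum_congr rfl fun k₁ _ => ?_
        refine Finset.sum_congr rfl fun k₂ _ => ?_
        have hT : (2 * ((k₁:ℤ) + k₂) - α₂ - α₃) = (2 * k₁ - α₂) + (2 * k₂ - α₃) := by ring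
        rw [hT, ← myE_mul]
        have hI1 : (Complex.I : ℂ) ^ α₁ ≠ 0 := pow_ne_zero _ Complex.I_ne_zero
        have hI3 : (Complex.I : ℂ) ^ α₃ ≠ 0 := pow_ne_zero _ Complex.I_ne_zero
        have h2 : (2:ℂ) ^ α₂ ≠ 0 := pow_ne_zero _ two_ne_zero
        have h3 : (2:ℂ) ^ α₃ ≠ 0 := pow_ne_zero _ two_ne_zero
        field_simp
        ring
end PW
section Deriv
open Real Complex

lemma iteratedDeriv_charFun_eq (μ : Measure ℝ) {n : ℕ}
    (hμ : ∀ k : ℕ, k ≤ n → Integrable (fun x => |x| ^ k) μ) (t : ℝ) :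
    iteratedDeriv n (_root_.charFun μ) t =
      ∫ x, ((x : ℂ) * Complex.I) ^ n * Complex.exp ((x * t : ℝ) * Complex.I) ∂μ := by
  set L : ℝ →L[ℝ] ℝ →L[ℝ] ℝ := (-(2 * π)⁻¹ : ℝ) • (ContinuousLinearMap.mul ℝ ℝ) with hLdef
  have hL : ∀ v w : ℝ, L v w = -(2 * π)⁻¹ * (v * w) := by
    intro v w; simp [hLdef]
  have hpi : (2 * π) ≠ 0 := by positivity
  have hchar : _root_.charFun μ =
      VectorFourier.fourierIntegral Real.fourierChar μ L.toLinearMap₁₂ (fun _ => (1 : ℂ)) := by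
    funext s
    rw [Real.vector_fourierIntegral_eq_integral_exp_smul, _root_.charFun]
    congr 1
    funext x
    have : (-2 * π * L.toLinearMap₁₂ x s) = x * s := by
      have := hL x s
      rw [show (L.toLinearMap₁₂ x s) = L x s from rfl, this]
      field_simp
    rw [this, smul_eq_mul, mul_one]
  have hInt : ∀ k : ℕ, (k : ℕ∞) ≤ (n : ℕ∞) →
      Integrable (fun v : ℝ => ‖v‖ ^ k * ‖(1 : ℂ)‖) μ := by
    intro k hk
    simpa [Real.norm_eq_abs] using hμ k (by exact_mod_cast hk)
  have hmeas1 : AEStronglyMeasurable (fun _ : ℝ => (1 : ℂ)) μ := aestronglyMeasurable_const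
  rw [iteratedDeriv_eq_iteratedFDeriv, hchar,
    VectorFourier.iteratedFDeriv_fourierIntegral L hInt hmeas1 (le_refl (n : ℕ∞)),
    Real.fourierIntegral_continuousMultilinearMap_apply'
      (VectorFourier.integrable_fourierPowSMulRight L (hInt n (le_refl _)) hmeas1),
    Real.vector_fourierIntegral_eq_integral_exp_smul]
  congr 1
  funext x
  rw [VectorFourier.fourierPowSMulRight_apply]
  have hprod : (∏ _i : Fin n, L x 1) = (-(2 * π)⁻¹ * x) ^ n := by
    simp [hL x 1, Finset.prod_const]
  have harg : (-2 * π * L.toLinearMap₁₂ x t) = x * t := by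
    rw [show (L.toLinearMap₁₂ x t) = L x t from rfl, hL]
    field_simp
  rw [harg, hprod]
  simp only [smul_eq_mul, Complex.real_smul, mul_one]
  have : (-(2 * ↑π * Complex.I)) ^ n * ((((-(2 * π)⁻¹ * x) ^ n : ℝ)) : ℂ)
      = ((x : ℂ) * Complex.I) ^ n := by
    push_cast
    rw [← mul_pow]
    congr 1
    field_simp [Real.pi_ne_zero]
  rw [this]
  ring

end Deriv

/-- Lemma 2: mixed-trigonometric-polynomial moments in terms of derivatives of the
characteristic function. -/
theorem stmt_8 {Ω : Type*} [MeasurableSpace Ω] (P : Measure Ω) [IsProbabilityMeasure P]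
    (μ : Measure ℝ) [IsProbabilityMeasure μ]
    (θ : Ω → ℝ) (hmeas : Measurable θ) (hlaw : P.map θ = μ) (α₁ α₂ α₃ : ℕ)
    (hint : Integrable (fun ω => |θ ω| ^ α₁) P) :
    ((∫ ω, (θ ω) ^ α₁ * (Real.cos (θ ω)) ^ α₂ * (Real.sin (θ ω)) ^ α₃ ∂P : ℝ) : ℂ) =
      (1 / (Complex.I ^ (α₁ + α₃) * 2 ^ (α₂ + α₃))) *
        ∑ k₁ ∈ Finset.range (α₂ + 1), ∑ k₂ ∈ Finset.range (α₃ + 1),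
          (α₂.choose k₁ : ℂ) * (α₃.choose k₂ : ℂ) * (-1 : ℂ) ^ (α₃ - k₂) *
            iteratedDeriv α₁ (_root_.charFun μ) ((2 * (k₁ + k₂) - α₂ - α₃ : ℤ) : ℝ) := by
  classical
  have hμint : Integrable (fun x : ℝ => |x| ^ α₁) μ := by
    rw [← hlaw]
    exact (integrable_map_measure
      ((continuous_abs.pow α₁).aestronglyMeasurable) hmeas.aemeasurable).mpr hint
  have hμk : ∀ k : ℕ, k ≤ α₁ → Integrable (fun x : ℝ => |x| ^ k) μ := by
    intro k hk
    refine ((integrable_const (1:ℝ)).add hμint).mono'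
      ((continuous_abs.pow k).aestronglyMeasurable) ?_
    filter_upwards with x
    rw [Real.norm_eq_abs, abs_pow, abs_abs]
    rcases le_total |x| 1 with h | h
    · have h1 : |x| ^ k ≤ 1 := pow_le_one₀ (abs_nonneg x) h
      have h2 := pow_nonneg (abs_nonneg x) α₁
      simp only [Pi.add_apply]; nlinarith
    · have h1 : |x| ^ k ≤ |x| ^ α₁ := pow_le_pow_right₀ h hk
      have : (0:ℝ) ≤ 1 := zero_le_one
      simp only [Pi.add_apply]; nlinarith
  have hD := iteratedDeriv_charFun_eq μ hμk
  have hbase : ∀ T : ℤ, Integrable (fun x : ℝ => ((x:ℂ) * Complex.I) ^ α₁ * myE x T) μ := by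
    intro T
    refine hμint.mono' ?_ ?_
    · apply Continuous.aestronglyMeasurable
      apply Continuous.mul
      · exact (Complex.continuous_ofReal.mul continuous_const).pow α₁
      · exact Complex.continuous_exp.comp
          ((Complex.continuous_ofReal.comp (continuous_id.mul continuous_const)).mul
            continuous_const)
    · filter_upwards with x
      rw [norm_mul, norm_pow, norm_mul, myE]
      simp [Complex.norm_exp]
  have hterm : ∀ (k₁ k₂ : ℕ), Integrable (fun x : ℝ =>
      (α₂.choose k₁ : ℂ) * (α₃.choose k₂ : ℂ) * (-1 : ℂ) ^ (α₃ - k₂) *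
        (((x:ℂ) * Complex.I) ^ α₁ * myE x (2 * (k₁ + k₂) - α₂ - α₃))) μ :=
    fun k₁ k₂ => (hbase _).const_mul _
  have h1 : (∫ ω, (θ ω) ^ α₁ * (Real.cos (θ ω)) ^ α₂ * (Real.sin (θ ω)) ^ α₃ ∂P)
      = ∫ x, x ^ α₁ * (Real.cos x) ^ α₂ * (Real.sin x) ^ α₃ ∂μ := by
    rw [← hlaw]
    have hc : Continuous (fun x : ℝ => x ^ α₁ * Real.cos x ^ α₂ * Real.sin x ^ α₃) := by fun_prop
    exact (integral_map hmeas.aemeasurable hc.aestronglyMeasurable).symm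
  rw [h1]
  have h2 : ((∫ x, x ^ α₁ * (Real.cos x) ^ α₂ * (Real.sin x) ^ α₃ ∂μ : ℝ) : ℂ)
      = ∫ x, ((x ^ α₁ * (Real.cos x) ^ α₂ * (Real.sin x) ^ α₃ : ℝ) : ℂ) ∂μ :=
    (integral_ofReal (𝕜 := ℂ)).symm
  rw [h2]
  have hDeq : ∀ (k₁ k₂ : ℕ), iteratedDeriv α₁ (_root_.charFun μ)
      ((2 * (k₁ + k₂) - α₂ - α₃ : ℤ) : ℝ)
      = ∫ x, ((x:ℂ) * Complex.I) ^ α₁ * myE x (2 * (k₁ + k₂) - α₂ - α₃) ∂μ := by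
    intro k₁ k₂
    exact hD _
  calc ∫ x, ((x ^ α₁ * (Real.cos x) ^ α₂ * (Real.sin x) ^ α₃ : ℝ) : ℂ) ∂μ
      = ∫ x, (1 / (Complex.I ^ (α₁ + α₃) * 2 ^ (α₂ + α₃))) *
          ∑ k₁ ∈ Finset.range (α₂ + 1), ∑ k₂ ∈ Finset.range (α₃ + 1),
            (α₂.choose k₁ : ℂ) * (α₃.choose k₂ : ℂ) * (-1 : ℂ) ^ (α₃ - k₂) *
              (((x:ℂ) * Complex.I) ^ α₁ * myE x (2 * (k₁ + k₂) - α₂ - α₃)) ∂μ := by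
        exact integral_congr_ae (Filter.Eventually.of_forall fun x => pointwise x α₁ α₂ α₃)
    _ = (1 / (Complex.I ^ (α₁ + α₃) * 2 ^ (α₂ + α₃))) *
          ∫ x, ∑ k₁ ∈ Finset.range (α₂ + 1), ∑ k₂ ∈ Finset.range (α₃ + 1),
            (α₂.choose k₁ : ℂ) * (α₃.choose k₂ : ℂ) * (-1 : ℂ) ^ (α₃ - k₂) *
              (((x:ℂ) * Complex.I) ^ α₁ * myE x (2 * (k₁ + k₂) - α₂ - α₃)) ∂μ := by
        rw [integral_const_mul]
    _ = (1 / (Complex.I ^ (α₁ + α₃) * 2 ^ (α₂ + α₃))) *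
          ∑ k₁ ∈ Finset.range (α₂ + 1), ∑ k₂ ∈ Finset.range (α₃ + 1),
            ∫ x, (α₂.choose k₁ : ℂ) * (α₃.choose k₂ : ℂ) * (-1 : ℂ) ^ (α₃ - k₂) *
              (((x:ℂ) * Complex.I) ^ α₁ * myE x (2 * (k₁ + k₂) - α₂ - α₃)) ∂μ := by
        congr 1
        rw [integral_finset_sum _ (fun k₁ _ => integrable_finset_sum _ fun k₂ _ => hterm k₁ k₂)]
        exact Finset.sum_congr rfl fun k₁ _ =>
          integral_finset_sum _ fun k₂ _ => hterm k₁ k₂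
    _ = (1 / (Complex.I ^ (α₁ + α₃) * 2 ^ (α₂ + α₃))) *
          ∑ k₁ ∈ Finset.range (α₂ + 1), ∑ k₂ ∈ Finset.range (α₃ + 1),
            (α₂.choose k₁ : ℂ) * (α₃.choose k₂ : ℂ) * (-1 : ℂ) ^ (α₃ - k₂) *
              iteratedDeriv α₁ (_root_.charFun μ) ((2 * (k₁ + k₂) - α₂ - α₃ : ℤ) : ℝ) := by
        congr 1
        refine Finset.sum_congr rfl fun k₁ _ => Finset.sum_congr rfl fun k₂ _ => ?_
        rw [hDeq k₁ k₂, integral_const_mul]
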